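/- Let A = {0,1}, k = 2k'+1 odd, n ≥ k+1, n0 = n−k+1, and J = {n0, n0+2, …, n−2, n}. (i) For every j ∈ J with j ≠ n0, the sequence (C^{[j]}_{[i]})_{0 ≤ i ≤ 2^n−1} is 2^{j+1}-periodic. (ii) For every i ∈ [0, 2^n−1], C^{[n0]}_{[i]} = γ^{n0,1}_{[μ(i,n0)]} if μ(i,n0) ∈ [0, 2^{n0}−1], and C^{[n0]}_{[i]} = ρ^{n0,1}_{[μ(i,n0)−2^{n0}]} if μ(i,n0) ∈ [2^{n0}, 2^{n0+1}−1]. (iii) For every i ∈ [0, 2^n−1] and every j ∈ J with j ≠ n0, C^{[j]}_{[i]} equals the prefix of length 2 of γ^{j, k−n+j}_{[μ(i,j)]} if μ(i,j) ∈ [0, 2^j−1], and the prefix of length 2 of ρ^{j, k−n+j}_{[μ(i,j)−2^j]} if μ(i,j) ∈ [2^j, 2^{j+1}−1]. -/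

import Mathlib

/-- Hamming distance between two words (lists) of the same length:
the number of positions in which they differ. -/
def hammingL {α : Type*} [DecidableEq α] (w w' : List α) : ℕ :=
  ((w.zip w').filter fun q => decide (q.1 ≠ q.2)).length

/-- `w` (restricted to indices `< N`) is a `σ_k`-Gray cycle over `X`:
its terms are pairwise distinct and enumerate `X` (a bijection from `[0, N-1]` onto `X`),
two consecutive terms have the same length and Hamming distance exactly `k`, and so do
the first and the last term. -/
def IsGrayCycleOn {α : Type*} [DecidableEq α] (k N : ℕ) (w : ℕ → List α)
    (X : Set (List α)) : Prop :=
  Set.BijOn w (Set.Iio N) X ∧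
  (∀ i, 1 ≤ i → i < N →
    (w (i - 1)).length = (w i).length ∧ hammingL (w (i - 1)) (w i) = k) ∧
  (0 < N → (w (N - 1)).length = (w 0).length ∧ hammingL (w (N - 1)) (w 0) = k)

/-- The bit complement `θ : 0 ↔ 1` on the binary alphabet `{0,1}`. -/
def cpl (x : Fin 2) : Fin 2 := x + 1

/-- The bit complement extended letterwise to binary words. -/
def cplW (w : List (Fin 2)) : List (Fin 2) := w.map cpl

/-- The reflected binary Gray code `g^{m,1}` over words of length `m`:
`g^{0,1} = (ε)` and `g^{m+1,1} = (0·g^{m,1}, 1·(g^{m,1})^R)`. -/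
def binGray : ℕ → List (List (Fin 2))
  | 0 => [[]]
  | m + 1 =>
      (binGray m).map (fun w => 0 :: w) ++ (binGray m).reverse.map (fun w => 1 :: w)

/-- The sequence `γ^{n0,1}`: `γ^{n0,1}_{[0]} = g^{n0,1}_{[0]}` and
`γ^{n0,1}_{[i]} = g^{n0,1}_{[2^{n0} - i]}` for `1 ≤ i ≤ 2^{n0} - 1`. -/
def gamma1 (n0 i : ℕ) : List (Fin 2) :=
  if i = 0 then (binGray n0).getD 0 [] else (binGray n0).getD (2 ^ n0 - i) []

/-- The sequence `ρ^{n0,1}`: `ρ^{n0,1}_{[0]} = g^{n0,1}_{[2^{n0}-1]}` and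
`ρ^{n0,1}_{[i]} = g^{n0,1}_{[i-1]}` for `1 ≤ i ≤ 2^{n0} - 1`. -/
def rho1 (n0 i : ℕ) : List (Fin 2) :=
  if i = 0 then (binGray n0).getD (2 ^ n0 - 1) [] else (binGray n0).getD (i - 1) []

/-- `grSeq n0 true t i` (resp. `grSeq n0 false t i`) is the term of index `i` of the
sequence `γ^{n0+2t, 2t+1}` (resp. `ρ^{n0+2t, 2t+1}`), built inductively: the base cases
are `γ^{n0,1}` and `ρ^{n0,1}`, and, writing `i = q·2^m + r` with `m = n0 + 2t` and
`r < 2^m`, `γ^{m+2, (2t+1)+2}_{[i]}` is `θ^r(00)·γ^{m,2t+1}_{[r]}`, `θ^r(01)·ρ^{m,2t+1}_{[r]}`,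
`θ^r(11)·γ^{m,2t+1}_{[r]}`, `θ^r(10)·ρ^{m,2t+1}_{[r]}` according to `q = 0, 1, 2, 3`, and
`ρ^{m+2, (2t+1)+2}_{[i]}` is `θ^r(10)·γ^{m,2t+1}_{[r]}`, `θ^r(11)·ρ^{m,2t+1}_{[r]}`,
`θ^r(01)·γ^{m,2t+1}_{[r]}`, `θ^r(00)·ρ^{m,2t+1}_{[r]}` according to `q = 0, 1, 2, 3`. -/
def grSeq (n0 : ℕ) : Bool → ℕ → ℕ → List (Fin 2)
  | b, 0, i => if b then gamma1 n0 i else rho1 n0 i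
  | b, t + 1, i =>
      cplW^[i % 2 ^ (n0 + 2 * t)]
        (if b then
          (if i / 2 ^ (n0 + 2 * t) = 0 then [0, 0]
           else if i / 2 ^ (n0 + 2 * t) = 1 then [0, 1]
           else if i / 2 ^ (n0 + 2 * t) = 2 then [1, 1] else [1, 0])
         else
          (if i / 2 ^ (n0 + 2 * t) = 0 then [1, 0]
           else if i / 2 ^ (n0 + 2 * t) = 1 then [1, 1]
           else if i / 2 ^ (n0 + 2 * t) = 2 then [0, 1] else [0, 0])) ++
        grSeq n0 (i / 2 ^ (n0 + 2 * t) % 2 == 0) t (i % 2 ^ (n0 + 2 * t))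

/-- For odd `k` and `n ≥ k + 1`, `gammaNK n k i` is the term `γ^{n,k}_{[i]}`
(here `n0 = n - k + 1` and `k = 2·(k/2) + 1`). -/
def gammaNK (n k i : ℕ) : List (Fin 2) := grSeq (n + 1 - k) true (k / 2) i

/-- For odd `k` and `n ≥ k + 1`, `rhoNK n k i` is the term `ρ^{n,k}_{[i]}`. -/
def rhoNK (n k i : ℕ) : List (Fin 2) := grSeq (n + 1 - k) false (k / 2) i

lemma cplW_iter_len (r : ℕ) (w : List (Fin 2)) : (cplW^[r] w).length = w.length := by
  induction r with
  | zero => rfl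
  | succ r ih => rw [Function.iterate_succ_apply', cplW, List.length_map, ih]

lemma drop2_grSeq (n0 : ℕ) (b : Bool) (t i : ℕ) :
    (grSeq n0 b (t+1) i).drop 2 =
      grSeq n0 (i / 2 ^ (n0 + 2 * t) % 2 == 0) t (i % 2 ^ (n0 + 2 * t)) := by
  simp only [grSeq]
  set B := cplW^[i % 2 ^ (n0 + 2 * t)]
        (if b then
          (if i / 2 ^ (n0 + 2 * t) = 0 then [0, 0]
           else if i / 2 ^ (n0 + 2 * t) = 1 then [0, 1]
           else if i / 2 ^ (n0 + 2 * t) = 2 then [1, 1] else [1, 0])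
         else
          (if i / 2 ^ (n0 + 2 * t) = 0 then [1, 0]
           else if i / 2 ^ (n0 + 2 * t) = 1 then [1, 1]
           else if i / 2 ^ (n0 + 2 * t) = 2 then [0, 1] else [0, 0])) with hB
  have hlen : B.length = 2 := by
    rw [hB, cplW_iter_len]; split_ifs <;> rfl
  exact List.drop_left' hlen

lemma mod_div_two (i L M : ℕ) (h : L + 1 ≤ M) :
    i % 2 ^ M / 2 ^ L % 2 = i / 2 ^ L % 2 := by
  rw [← Nat.mod_mul_right_div_self, ← Nat.mod_mul_right_div_self, Nat.mod_mod_of_dvd]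
  rw [← pow_succ]
  exact pow_dvd_pow 2 h

lemma peel (n0 : ℕ) : ∀ t s, s < t → ∀ (b : Bool) (i : ℕ),
    (grSeq n0 b t i).drop (2 * (t - s)) =
      grSeq n0 (i / 2 ^ (n0 + 2 * s) % 2 == 0) s (i % 2 ^ (n0 + 2 * s)) := by
  intro t
  induction t with
  | zero => intro s hs; omega
  | succ t ih =>
    intro s hs b i
    rcases Nat.lt_or_ge s t with h | h
    · rw [show 2 * (t + 1 - s) = 2 + 2 * (t - s) from by omega, ← List.drop_drop,
        drop2_grSeq, ih s h,
        mod_div_two i (n0 + 2*s) (n0 + 2*t) (by omega),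
        Nat.mod_mod_of_dvd i (pow_dvd_pow 2 (by omega : n0+2*s ≤ n0+2*t))]
    · obtain rfl : s = t := by omega
      rw [show 2 * (s + 1 - s) = 2 from by omega, drop2_grSeq]


lemma key_lemma (n k : ℕ) (hk2 : k % 2 = 1) (hn : k + 1 ≤ n)
    (j : ℕ) (h1 : n - k + 1 < j) (h2 : j ≤ n) (h3 : (j - (n - k + 1)) % 2 = 0)
    (h4 : j < n) (i : ℕ) :
    (gammaNK n k i).drop (n - j) =
      grSeq (n + 1 - k) (i / 2 ^ j % 2 == 0) ((j - (n - k + 1)) / 2) (i % 2 ^ j) := by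
  have hj : j = (n + 1 - k) + 2 * ((j - (n - k + 1)) / 2) := by omega
  have hskk : (j - (n - k + 1)) / 2 < k / 2 := by omega
  have hp := peel (n + 1 - k) (k / 2) ((j - (n - k + 1)) / 2) hskk true i
  rw [← hj] at hp
  unfold gammaNK
  rw [show n - j = 2 * (k / 2 - (j - (n - k + 1)) / 2) from by omega, hp]

lemma div2_pow (i j : ℕ) : i / 2 ^ j % 2 = i % 2 ^ (j + 1) / 2 ^ j := by
  rw [← Nat.mod_mul_right_div_self, ← pow_succ]

lemma mod2_pow (i j : ℕ) : i % 2 ^ (j + 1) % 2 ^ j = i % 2 ^ j :=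
  Nat.mod_mod_of_dvd i (pow_dvd_pow 2 j.le_succ)


/-- Let `k` be odd, `n ≥ k + 1`, `n0 = n - k + 1`, and `J = {n0, n0+2, …, n-2, n}`.
For `j ∈ J` with `j ≠ n0`, `C^{[j]}_{[i]}` is the two-letter factor of `γ^{n,k}_{[i]}`
occupying positions `j` and `j-1` from the right (i.e. `take 2` of `drop (n - j)`), and
`C^{[n0]}_{[i]}` is the suffix of length `n0` (i.e. `drop (k - 1)`); `μ(i,j) = i mod 2^{j+1}`.
(i) For `j ∈ J`, `j ≠ n0`, the sequence `(C^{[j]}_{[i]})_{0 ≤ i ≤ 2^n-1}` is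
`2^{j+1}`-periodic. (ii) `C^{[n0]}_{[i]} = γ^{n0,1}_{[μ(i,n0)]}` if `μ(i,n0) < 2^{n0}`
and `= ρ^{n0,1}_{[μ(i,n0)-2^{n0}]}` otherwise. (iii) For `j ∈ J`, `j ≠ n0`,
`C^{[j]}_{[i]}` is the prefix of length 2 of `γ^{j,k-n+j}_{[μ(i,j)]}` if `μ(i,j) < 2^j`,
and of `ρ^{j,k-n+j}_{[μ(i,j)-2^j]}` otherwise. -/
theorem statement9 (n k : ℕ) (hk1 : 1 ≤ k) (hk : Odd k) (hn : k + 1 ≤ n) :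
    (∀ j, n - k + 1 < j → j ≤ n → (j - (n - k + 1)) % 2 = 0 →
      ∀ i, i + 2 ^ (j + 1) ≤ 2 ^ n - 1 →
        ((gammaNK n k (i + 2 ^ (j + 1))).drop (n - j)).take 2 =
          ((gammaNK n k i).drop (n - j)).take 2) ∧
    (∀ i < 2 ^ n,
      (i % 2 ^ (n - k + 2) < 2 ^ (n - k + 1) →
        (gammaNK n k i).drop (k - 1) = gamma1 (n - k + 1) (i % 2 ^ (n - k + 2))) ∧
      (2 ^ (n - k + 1) ≤ i % 2 ^ (n - k + 2) →
        (gammaNK n k i).drop (k - 1) =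
          rho1 (n - k + 1) (i % 2 ^ (n - k + 2) - 2 ^ (n - k + 1)))) ∧
    (∀ j, n - k + 1 < j → j ≤ n → (j - (n - k + 1)) % 2 = 0 → ∀ i < 2 ^ n,
      (i % 2 ^ (j + 1) < 2 ^ j →
        ((gammaNK n k i).drop (n - j)).take 2 =
          (gammaNK j (k + j - n) (i % 2 ^ (j + 1))).take 2) ∧
      (2 ^ j ≤ i % 2 ^ (j + 1) →
        ((gammaNK n k i).drop (n - j)).take 2 =
          (rhoNK j (k + j - n) (i % 2 ^ (j + 1) - 2 ^ j)).take 2)) := by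
  have hk2 : k % 2 = 1 := Nat.odd_iff.mp hk
  refine ⟨?_, ?_, ?_⟩
  · -- (i) periodicity
    intro j h1 h2 h3 i hi
    rcases Nat.lt_or_ge j n with h4 | h4
    · rw [key_lemma n k hk2 hn j h1 h2 h3 h4, key_lemma n k hk2 hn j h1 h2 h3 h4]
      have hd : (i + 2 ^ (j + 1)) / 2 ^ j = i / 2 ^ j + 2 := by
        rw [show (2:ℕ) ^ (j + 1) = 2 ^ j * 2 from pow_succ 2 j,
          Nat.add_mul_div_left _ _ (Nat.pow_pos (by norm_num))]
      have hm : (i + 2 ^ (j + 1)) % 2 ^ j = i % 2 ^ j := by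
        rw [show (2:ℕ) ^ (j + 1) = 2 ^ j * 2 from pow_succ 2 j]
        exact Nat.add_mul_mod_self_left i (2 ^ j) 2
      rw [hd, hm, show (i / 2 ^ j + 2) % 2 = i / 2 ^ j % 2 from by omega]
    · exfalso
      have e1 : (2:ℕ) ^ (j + 1) = 2 ^ j * 2 := pow_succ 2 j
      have e2 : (2:ℕ) ^ n ≤ 2 ^ j := Nat.pow_le_pow_right (by norm_num) h4
      have e3 : 0 < (2:ℕ) ^ n := Nat.pow_pos (by norm_num)
      omega
  · -- (ii) base factor
    intro i hi
    rcases Nat.lt_or_ge k 2 with hk3 | hk3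
    · -- k = 1
      obtain rfl : k = 1 := by omega
      have hmod : i % 2 ^ (n - 1 + 2) = i := by
        refine Nat.mod_eq_of_lt (lt_of_lt_of_le hi ?_)
        exact Nat.pow_le_pow_right (by norm_num) (by omega)
      constructor
      · intro _
        rw [hmod, show n - 1 + 1 = n from by omega]
        unfold gammaNK
        rw [show n + 1 - 1 = n from by omega]
        simp [grSeq]
      · intro h
        rw [hmod] at h
        have : (2:ℕ) ^ n ≤ 2 ^ (n - 1 + 1) := Nat.pow_le_pow_right (by norm_num) (by omega)
        omega
    · -- k ≥ 3, so k/2 ≥ 1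
      have hp := peel (n + 1 - k) (k / 2) 0 (by omega) true i
      simp only [Nat.mul_zero, Nat.add_zero, Nat.sub_zero] at hp
      have hnn : n + 1 - k = n - k + 1 := by omega
      rw [hnn] at hp
      have hpos : 0 < (2:ℕ) ^ (n - k + 1) := Nat.pow_pos (by norm_num)
      have halt : i % 2 ^ (n - k + 2) < 2 ^ (n - k + 1) * 2 := by
        have := Nat.mod_lt i (show 0 < (2:ℕ) ^ (n - k + 2) from Nat.pow_pos (by norm_num))
        rw [show (2:ℕ) ^ (n - k + 1) * 2 = 2 ^ (n - k + 2) from by rw [← pow_succ]]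
        omega
      have hdiv : i / 2 ^ (n - k + 1) % 2 = i % 2 ^ (n - k + 2) / 2 ^ (n - k + 1) := by
        have := div2_pow i (n - k + 1)
        rwa [show n - k + 1 + 1 = n - k + 2 from by omega] at this
      have hmm : i % 2 ^ (n - k + 2) % 2 ^ (n - k + 1) = i % 2 ^ (n - k + 1) := by
        have := mod2_pow i (n - k + 1)
        rwa [show n - k + 1 + 1 = n - k + 2 from by omega] at this
      constructor
      · intro h
        have hb : i / 2 ^ (n - k + 1) % 2 = 0 := by
          rw [hdiv, Nat.div_eq_of_lt h]
        have hm : i % 2 ^ (n - k + 1) = i % 2 ^ (n - k + 2) := by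
          rw [← hmm, Nat.mod_eq_of_lt h]
        unfold gammaNK
        rw [hnn, show k - 1 = 2 * (k / 2) from by omega, hp, hb, hm]
        simp [grSeq]
      · intro h
        have hb : i / 2 ^ (n - k + 1) % 2 = 1 := by
          rw [hdiv]
          have : i % 2 ^ (n - k + 2) / 2 ^ (n - k + 1) < 2 := by
            exact Nat.div_lt_of_lt_mul halt
          have h2 : 1 ≤ i % 2 ^ (n - k + 2) / 2 ^ (n - k + 1) :=
            (Nat.one_le_div_iff hpos).mpr h
          omega
        have hm : i % 2 ^ (n - k + 1) = i % 2 ^ (n - k + 2) - 2 ^ (n - k + 1) := by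
          rw [← hmm, Nat.mod_eq_sub_mod h, Nat.mod_eq_of_lt (by omega)]
        unfold gammaNK
        rw [hnn, show k - 1 = 2 * (k / 2) from by omega, hp, hb, hm]
        simp [grSeq]
  · -- (iii)
    intro j h1 h2 h3 i hi
    rcases Nat.lt_or_ge j n with h4 | h4
    · have hkl := key_lemma n k hk2 hn j h1 h2 h3 h4 i
      have e1 : j + 1 - (k + j - n) = n + 1 - k := by omega
      have e2 : (k + j - n) / 2 = (j - (n - k + 1)) / 2 := by omega
      have hd := div2_pow i j
      have hm := mod2_pow i j
      constructor
      · intro h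
        have hb : i / 2 ^ j % 2 = 0 := by rw [hd, Nat.div_eq_of_lt h]
        have hmm : i % 2 ^ j = i % 2 ^ (j + 1) := by rw [← hm, Nat.mod_eq_of_lt h]
        rw [hkl, hb, hmm]
        unfold gammaNK
        rw [e1, e2]
        rfl
      · intro h
        have hjp : i % 2 ^ (j + 1) < 2 ^ j * 2 := by
          have := Nat.mod_lt i (show 0 < (2:ℕ) ^ (j + 1) from Nat.pow_pos (by norm_num))
          rw [show (2:ℕ) ^ j * 2 = 2 ^ (j + 1) from by rw [← pow_succ]]
          omega
        have hpos : 0 < (2:ℕ) ^ j := Nat.pow_pos (by norm_num)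
        have hb : i / 2 ^ j % 2 = 1 := by
          rw [hd]
          have h5 : i % 2 ^ (j + 1) / 2 ^ j < 2 := Nat.div_lt_of_lt_mul hjp
          have h6 : 1 ≤ i % 2 ^ (j + 1) / 2 ^ j := (Nat.one_le_div_iff hpos).mpr h
          omega
        have hmm : i % 2 ^ j = i % 2 ^ (j + 1) - 2 ^ j := by
          rw [← hm, Nat.mod_eq_sub_mod h, Nat.mod_eq_of_lt (by omega)]
        rw [hkl, hb, hmm]
        unfold rhoNK
        rw [e1, e2]
        rfl
    · obtain rfl : n = j := by omega
      have hmod : i % 2 ^ (n + 1) = i :=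
        Nat.mod_eq_of_lt (lt_of_lt_of_le hi (Nat.pow_le_pow_right (by norm_num) n.le_succ))
      constructor
      · intro _
        rw [hmod, show n - n = 0 from by omega, show k + n - n = k from by omega,
          List.drop_zero]
      · intro h
        rw [hmod] at h
        omega
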